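/- Let f: M → M be a Kupka-Smale diffeomorphism of a compact manifold with the shadowing property. If a chain transitive class Λ contains a periodic point p, then Λ equals the homoclinic class of p. -/

import Mathlib

open Function Topology Filter
open scoped Manifold

noncomputable section

set_option linter.unusedSectionVars false

variable {d : ℕ} {M : Type*} [MetricSpace M] [CompactSpace M]
  [ChartedSpace (EuclideanSpace ℝ (Fin d)) M]

/-- The shadowing property for an invertible map of a metric space. -/
def ShadowingProperty (f : M ≃ M) : Prop :=
  ∀ ε > (0 : ℝ), ∃ δ > (0 : ℝ), ∀ x : ℤ → M,
    (∀ n : ℤ, dist (f (x n)) (x (n + 1)) < δ) →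
    ∃ y : M, ∀ n : ℤ, dist ((f ^ n) y) (x n) < ε

/-- There is a finite `ε`-pseudo-orbit (an `ε`-chain) from `x` to `y`. -/
def ChainFrom (f : M → M) (ε : ℝ) (x y : M) : Prop :=
  ∃ n : ℕ, 0 < n ∧ ∃ c : ℕ → M, c 0 = x ∧ c n = y ∧
    ∀ i < n, dist (f (c i)) (c (i + 1)) < ε

/-- `x` and `y` lie in the same chain transitive class. -/
def SameChainClass (f : M → M) (x y : M) : Prop :=
  ∀ ε > (0 : ℝ), ChainFrom f ε x y ∧ ChainFrom f ε y x

/-- The chain transitive class of a point `p`. -/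
def chainClass (f : M → M) (p : M) : Set M := {x | SameChainClass f x p}

/-- The stable set of the point `p` for the map `g`. -/
def stableSet (g : M → M) (p : M) : Set M :=
  {x | Tendsto (fun n : ℕ => dist (g^[n] x) (g^[n] p)) atTop (𝓝 0)}

/-- The stable set of the orbit of `p`. -/
def orbitStable (f : M ≃ M) (p : M) : Set M :=
  ⋃ n : ℤ, stableSet ⇑f ((f ^ n) p)

/-- The unstable set of the orbit of `p`. -/
def orbitUnstable (f : M ≃ M) (p : M) : Set M :=
  ⋃ n : ℤ, stableSet ⇑f.symm ((f ^ n) p)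

/-- Two sets intersect transversally at `z`: read in the preferred chart at `z`, the
tangent cones of the two sets span the whole model space. -/
def TransverseAt (z : M) (A B : Set M) : Prop :=
  Submodule.span ℝ (tangentConeAt ℝ
      (extChartAt (𝓡 d) z '' (A ∩ (extChartAt (𝓡 d) z).source)) (extChartAt (𝓡 d) z z)) ⊔
    Submodule.span ℝ (tangentConeAt ℝ
      (extChartAt (𝓡 d) z '' (B ∩ (extChartAt (𝓡 d) z).source)) (extChartAt (𝓡 d) z z)) = ⊤

/-- `p` is a hyperbolic periodic point of (least or not) period `k` for `f`: the derivative
of `f^[k]` at `p` admits an invariant splitting into a uniformly contracted and a uniformly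
expanded subspace. -/
def IsHyperbolicPeriodicPt (f : M → M) (p : M) (k : ℕ) : Prop :=
  0 < k ∧ f^[k] p = p ∧
  ∀ A : EuclideanSpace ℝ (Fin d) →L[ℝ] EuclideanSpace ℝ (Fin d),
    A = mfderiv (𝓡 d) (𝓡 d) (f^[k]) p →
    ∃ (Es Eu : Submodule ℝ (EuclideanSpace ℝ (Fin d))) (C lam : ℝ),
      IsCompl Es Eu ∧ 0 < C ∧ 0 < lam ∧ lam < 1 ∧
      (∀ v ∈ Es, A v ∈ Es) ∧ (∀ v ∈ Eu, A v ∈ Eu) ∧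
      (∀ n : ℕ, ∀ v ∈ Es, ‖(A ^ n) v‖ ≤ C * lam ^ n * ‖v‖) ∧
      (∀ n : ℕ, ∀ v ∈ Eu, C⁻¹ * (lam ^ n)⁻¹ * ‖v‖ ≤ ‖(A ^ n) v‖)

/-- `p` is a periodic point of `f`. -/
def IsPeriodic (f : M → M) (p : M) : Prop := ∃ k : ℕ, 0 < k ∧ f^[k] p = p

/-- `f` is Kupka–Smale: all periodic points are hyperbolic and all intersections of stable
and unstable manifolds of periodic orbits are transverse. -/
def KupkaSmale (f : M ≃ M) : Prop :=
  (∀ (p : M) (k : ℕ), 0 < k → (⇑f)^[k] p = p → IsHyperbolicPeriodicPt (d := d) ⇑f p k) ∧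
  (∀ p q z : M, IsPeriodic ⇑f p → IsPeriodic ⇑f q →
    z ∈ orbitStable f p → z ∈ orbitUnstable f q →
    TransverseAt (d := d) z (orbitStable f p) (orbitUnstable f q))

/-- The homoclinic class of a periodic point `p`: the closure of the set of transverse
intersection points of the stable and unstable manifolds of the orbit of `p`. -/
def homoclinicClass (f : M ≃ M) (p : M) : Set M :=
  closure {z | z ∈ orbitStable f p ∧ z ∈ orbitUnstable f p ∧
    TransverseAt (d := d) z (orbitStable f p) (orbitUnstable f p)}


/-! ### Auxiliary lemmas -/

section Aux

lemma aux_pow_apply (f : M ≃ M) (n : ℕ) (x : M) : (f ^ (n : ℤ)) x = (⇑f)^[n] x := by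
  rw [zpow_natCast, Equiv.Perm.iterate_eq_pow]

lemma aux_zpow_add_apply (f : M ≃ M) (a b : ℤ) (x : M) :
    (f ^ (a + b)) x = (f ^ a) ((f ^ b) x) := by
  rw [zpow_add, Equiv.Perm.mul_apply]

lemma aux_symm_iterate (f : M ≃ M) (n : ℕ) (x : M) :
    (⇑f.symm)^[n] x = (f ^ (-(n : ℤ))) x := by
  rw [zpow_neg, zpow_natCast]
  have h : f.symm = f⁻¹ := rfl
  rw [h, ← inv_pow, Equiv.Perm.iterate_eq_pow]

lemma aux_zpow_mul_k (f : M ≃ M) (p : M) (k : ℕ) (hp : (⇑f)^[k] p = p) (z : ℤ) :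
    (f ^ (z * (k : ℤ))) p = p := by
  have hk : (f ^ (k : ℤ)) p = p := by rw [aux_pow_apply]; exact hp
  have hkneg : (f ^ (-(k : ℤ))) p = p := by
    conv_lhs => rw [← hk, ← aux_zpow_add_apply]
    simp
  induction z using Int.induction_on with
  | zero => simp
  | succ n ih =>
      have h : ((n : ℤ) + 1) * (k : ℤ) = (k : ℤ) + n * k := by ring
      rw [h, aux_zpow_add_apply, ih, hk]
  | pred n ih =>
      have h : (-(n : ℤ) - 1) * (k : ℤ) = -(k : ℤ) + (-(n : ℤ)) * k := by ring
      rw [h, aux_zpow_add_apply, ih, hkneg]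

lemma aux_zpow_mod (f : M ≃ M) (p : M) (k : ℕ) (hk : 0 < k) (hp : (⇑f)^[k] p = p) (z : ℤ) :
    (f ^ z) p = (⇑f)^[(z % (k : ℤ)).toNat] p ∧ (z % (k : ℤ)).toNat < k := by
  have hkpos : (0 : ℤ) < (k : ℤ) := by exact_mod_cast hk
  have hdm : (k : ℤ) * (z / (k : ℤ)) + z % (k : ℤ) = z := Int.mul_ediv_add_emod z k
  have hnn : 0 ≤ z % (k : ℤ) := Int.emod_nonneg z (by positivity)
  have hlt : z % (k : ℤ) < (k : ℤ) := Int.emod_lt_of_pos z hkpos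
  constructor
  · have hz : z = z % (k : ℤ) + (z / (k : ℤ)) * (k : ℤ) := by
      linarith [mul_comm (z / (k : ℤ)) (k : ℤ)]
    conv_lhs => rw [hz]
    rw [aux_zpow_add_apply, aux_zpow_mul_k f p k hp, ← aux_pow_apply]
    congr 1
    rw [Int.toNat_of_nonneg hnn]
  · omega

lemma aux_chainFrom_mono {f : M → M} {ε ε' : ℝ} {x y : M} (h : ChainFrom f ε x y)
    (hle : ε ≤ ε') : ChainFrom f ε' x y := by
  obtain ⟨n, hn, c, h0, hn', hstep⟩ := h
  exact ⟨n, hn, c, h0, hn', fun i hi => lt_of_lt_of_le (hstep i hi) hle⟩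

/-- A point in the stable set of the orbit of a periodic point chains to the point. -/
lemma aux_stable_chain (f : M ≃ M) (p z : M) (k : ℕ) (hk : 0 < k)
    (hp : (⇑f)^[k] p = p) (a : ℤ) (hz : z ∈ stableSet ⇑f ((f ^ a) p))
    {ε : ℝ} (hε : 0 < ε) : ChainFrom ⇑f ε z p := by
  have hz' : Tendsto (fun n : ℕ => dist ((⇑f)^[n] z) ((⇑f)^[n] ((f ^ a) p))) atTop (𝓝 0) := hz
  obtain ⟨N, hNd, hN1⟩ :=
    ((hz'.eventually_lt_const hε).and (eventually_ge_atTop 1)).exists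
  set r := (((a + N) : ℤ) % (k : ℤ)).toNat with hr
  obtain ⟨hmodeq, hrk⟩ := aux_zpow_mod f p k hk hp (a + N)
  set w := (⇑f)^[N] ((f ^ a) p) with hw
  have hw' : w = (⇑f)^[r] p := by
    rw [hw, ← aux_pow_apply, ← aux_zpow_add_apply, add_comm ((N : ℤ)) a, hmodeq]
  set m := k - r with hm
  have hm1 : 1 ≤ m := by omega
  have hwm : (⇑f)^[m] w = p := by
    rw [hw', ← Function.iterate_add_apply]
    have h : m + r = k := by omega
    rw [h, hp]
  refine ⟨N + m, by omega, fun i => if i < N then (⇑f)^[i] z else (⇑f)^[i - N] w, ?_, ?_, ?_⟩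
  · beta_reduce
    rw [if_pos (by omega : 0 < N)]
    rfl
  · beta_reduce
    rw [if_neg (by omega : ¬ (N + m < N))]
    have h : N + m - N = m := by omega
    rw [h, hwm]
  · intro i hi
    beta_reduce
    by_cases h1 : i + 1 < N
    · have h2 : i < N := by omega
      rw [if_pos h2, if_pos h1, ← Function.iterate_succ_apply' (⇑f) i z]
      simpa using hε
    · by_cases h2 : i < N
      · have hiN : i + 1 = N := by omega
        rw [if_pos h2, if_neg h1]
        have h : i + 1 - N = 0 := by omega
        rw [h]
        simp only [Function.iterate_zero, id_eq]
        have hgoal : f ((⇑f)^[i] z) = (⇑f)^[N] z := by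
          rw [← hiN]
          exact (Function.iterate_succ_apply' (⇑f) i z).symm
        rw [hgoal, hw]
        exact hNd
      · rw [if_neg h2, if_neg h1]
        have h : i + 1 - N = (i - N) + 1 := by omega
        rw [h, ← Function.iterate_succ_apply' (⇑f) (i - N) w]
        simpa using hε

/-- A point in the unstable set of the orbit of a periodic point is chained from the point. -/
lemma aux_unstable_chain (f : M ≃ M) (p z : M) (k : ℕ) (hk : 0 < k)
    (hp : (⇑f)^[k] p = p) (b : ℤ) (hz : z ∈ stableSet ⇑f.symm ((f ^ b) p))
    {ε : ℝ} (hε : 0 < ε) : ChainFrom ⇑f ε p z := by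
  have hz' : Tendsto (fun n : ℕ => dist ((⇑f.symm)^[n] z) ((⇑f.symm)^[n] ((f ^ b) p)))
      atTop (𝓝 0) := hz
  obtain ⟨J', hJd, -⟩ :=
    ((hz'.eventually_lt_const hε).and (eventually_ge_atTop 0)).exists
  set J := J' + 1 with hJdef
  set r := (((b - J) : ℤ) % (k : ℤ)).toNat with hr
  obtain ⟨hmodeq, hrk⟩ := aux_zpow_mod f p k hk hp (b - J)
  have hwr : (⇑f)^[r] p = (f ^ ((b : ℤ) - J)) p := hmodeq.symm
  refine ⟨r + J, by omega, fun i => if i ≤ r then (⇑f)^[i] p else (⇑f.symm)^[J - (i - r)] z,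
    ?_, ?_, ?_⟩
  · beta_reduce
    rw [if_pos (by omega : 0 ≤ r)]
    rfl
  · beta_reduce
    rw [if_neg (by omega : ¬ (r + J ≤ r))]
    have h : J - (r + J - r) = 0 := by omega
    rw [h]
    simp
  · intro i hi
    beta_reduce
    by_cases h1 : i + 1 ≤ r
    · have h2 : i ≤ r := by omega
      rw [if_pos h2, if_pos h1, ← Function.iterate_succ_apply' (⇑f) i p]
      simpa using hε
    · by_cases h2 : i ≤ r
      · -- the jump at i = r
        have hir : i = r := by omega
        rw [if_pos h2, if_neg h1]
        have hired : J - (i + 1 - r) = J' := by omega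
        rw [hired, hir]
        have hL : f ((⇑f)^[r] p) = (f ^ ((1 : ℤ) + ((b : ℤ) - J))) p := by
          rw [hwr, aux_zpow_add_apply, zpow_one]
        have hR : (⇑f.symm)^[J'] ((f ^ b) p) = (f ^ (-(J' : ℤ) + b)) p := by
          rw [aux_symm_iterate, ← aux_zpow_add_apply]
        have heq : ((1 : ℤ) + ((b : ℤ) - J)) = (-(J' : ℤ) + b) := by
          rw [hJdef]; push_cast; ring
        rw [hL, heq, ← hR, dist_comm]
        exact hJd
      · rw [if_neg h2, if_neg h1]
        have hJi : i - r < J := by omega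
        have h : J - (i - r) = (J - (i + 1 - r)) + 1 := by omega
        rw [h, Function.iterate_succ_apply' (⇑f.symm) _ z, Equiv.apply_symm_apply]
        simpa using hε

/-- The chain class is closed (for a continuous map). -/
lemma aux_chainClass_closed {f : M → M} (hf : Continuous f) (p : M) :
    IsClosed (chainClass f p) := by
  refine isClosed_of_closure_subset ?_
  intro x hx
  intro ε hε
  have hcont := (Metric.continuous_iff.mp hf) x (ε / 2) (by positivity)
  obtain ⟨δ', hδ', hδ⟩ := hcont
  obtain ⟨x', hx', hdx⟩ := Metric.mem_closure_iff.mp hx (min δ' (ε / 2))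
    (lt_min hδ' (by positivity))
  obtain ⟨⟨n1, hn1, c1, hc10, hc1n, hc1s⟩, ⟨n2, hn2, c2, hc20, hc2n, hc2s⟩⟩ :=
    hx' (ε / 2) (by positivity)
  constructor
  · -- chain from x to p, modifying the chain from x'
    refine ⟨n1, hn1, fun i => if i = 0 then x else c1 i, by simp, ?_, ?_⟩
    · beta_reduce
      rw [if_neg (by omega : ¬ (n1 = 0)), hc1n]
    · intro i hi
      beta_reduce
      by_cases h0 : i = 0
      · subst h0
        rw [if_pos rfl, if_neg (by omega : ¬ (0 + 1 = 0))]
        calc dist (f x) (c1 (0 + 1)) ≤ dist (f x) (f x') + dist (f x') (c1 (0 + 1)) :=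
              dist_triangle _ _ _
          _ < ε / 2 + ε / 2 := by
              refine add_lt_add ?_ ?_
              · rw [dist_comm]
                exact hδ x' (lt_of_lt_of_le (by rwa [dist_comm]) (min_le_left _ _))
              · rw [← hc10]
                exact hc1s 0 hi
          _ = ε := by ring
      · rw [if_neg h0, if_neg (by omega : ¬ (i + 1 = 0))]
        exact lt_of_lt_of_le (hc1s i hi) (by linarith)
  · -- chain from p to x, modifying the chain to x'
    refine ⟨n2, hn2, fun i => if i = n2 then x else c2 i, ?_, by simp, ?_⟩
    · beta_reduce
      rw [if_neg (by omega : ¬ (0 = n2)), hc20]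
    · intro i hi
      beta_reduce
      rw [if_neg (by omega : ¬ (i = n2))]
      by_cases hlast : i + 1 = n2
      · rw [if_pos hlast]
        calc dist (f (c2 i)) x ≤ dist (f (c2 i)) (c2 (i + 1)) + dist (c2 (i + 1)) x :=
              dist_triangle _ _ _
          _ < ε / 2 + ε / 2 := by
              refine add_lt_add (hc2s i hi) ?_
              rw [hlast, hc2n, dist_comm]
              exact lt_of_lt_of_le hdx (min_le_right _ _)
          _ = ε := by ring
      · rw [if_neg hlast]
        exact lt_of_lt_of_le (hc2s i hi) (by linarith)


/-- Hyperbolic cone-argument: an orbit of an approximately linear hyperbolic map that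
stays in a ball converges to the fixed point. -/
lemma aux_cone_lemma {E : Type*} [NormedAddCommGroup E] [NormedSpace ℝ E]
    (D : E →L[ℝ] E) (Ps Pu : E →L[ℝ] E) (K θ Θ c ρ : ℝ)
    (hsum : ∀ v, Ps v + Pu v = v)
    (hcomm_s : ∀ v, Ps (D v) = D (Ps v)) (hcomm_u : ∀ v, Pu (D v) = D (Pu v))
    (hθ : ∀ v, ‖D (Ps v)‖ ≤ θ * ‖Ps v‖) (hΘ : ∀ v, Θ * ‖Pu v‖ ≤ ‖D (Pu v)‖)
    (hKs : ∀ v, ‖Ps v‖ ≤ K * ‖v‖) (hKu : ∀ v, ‖Pu v‖ ≤ K * ‖v‖)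
    (hK : 1 ≤ K) (hθ0 : 0 ≤ θ) (hc : 0 ≤ c) (hρ : 0 ≤ ρ)
    (hsmall1 : θ + 2 * K * c ≤ 1 / 2) (hsmall2 : 2 ≤ Θ - 2 * K * c)
    (x : ℕ → E) (xs : E)
    (hball : ∀ m, ‖x m - xs‖ ≤ ρ)
    (hstep : ∀ m, ‖x (m + 1) - xs - D (x m - xs)‖ ≤ c * ‖x m - xs‖) :
    Tendsto x atTop (𝓝 xs) := by
  set u : ℕ → E := fun m => x m - xs with hu
  set s : ℕ → E := fun m => Ps (u m) with hs
  set w : ℕ → E := fun m => Pu (u m) with hw'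
  have hnorm_u : ∀ m, ‖u m‖ ≤ ‖s m‖ + ‖w m‖ := by
    intro m
    calc ‖u m‖ = ‖Ps (u m) + Pu (u m)‖ := by rw [hsum]
      _ ≤ ‖Ps (u m)‖ + ‖Pu (u m)‖ := norm_add_le _ _
  have he : ∀ m, ‖u (m + 1) - D (u m)‖ ≤ c * ‖u m‖ := hstep
  have hs_rec : ∀ m, s (m + 1) = D (s m) + Ps (u (m + 1) - D (u m)) := by
    intro m
    have : u (m + 1) = D (u m) + (u (m + 1) - D (u m)) := by abel
    rw [hs]
    simp only []
    rw [this, map_add, hcomm_s]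
    congr 2
    abel
  have hw_rec : ∀ m, w (m + 1) = D (w m) + Pu (u (m + 1) - D (u m)) := by
    intro m
    have : u (m + 1) = D (u m) + (u (m + 1) - D (u m)) := by abel
    rw [hw']
    simp only []
    rw [this, map_add, hcomm_u]
    congr 2
    abel
  have hs_bound : ∀ m, ‖s (m + 1)‖ ≤ θ * ‖s m‖ + K * c * ‖u m‖ := by
    intro m
    rw [hs_rec m]
    calc ‖D (s m) + Ps (u (m + 1) - D (u m))‖
        ≤ ‖D (s m)‖ + ‖Ps (u (m + 1) - D (u m))‖ := norm_add_le _ _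
      _ ≤ θ * ‖s m‖ + K * ‖u (m + 1) - D (u m)‖ := by
          refine add_le_add ?_ (hKs _)
          have := hθ (u m)
          simpa using this
      _ ≤ θ * ‖s m‖ + K * (c * ‖u m‖) := by
          refine add_le_add le_rfl ?_
          exact mul_le_mul_of_nonneg_left (he m) (by linarith)
      _ = θ * ‖s m‖ + K * c * ‖u m‖ := by ring
  have hw_bound : ∀ m, Θ * ‖w m‖ - K * c * ‖u m‖ ≤ ‖w (m + 1)‖ := by
    intro m
    have h1 : ‖D (w m)‖ ≤ ‖w (m + 1)‖ + ‖Pu (u (m + 1) - D (u m))‖ := by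
      have : D (w m) = w (m + 1) - Pu (u (m + 1) - D (u m)) := by rw [hw_rec m]; abel
      rw [this]
      exact norm_sub_le _ _
    have h2 : Θ * ‖w m‖ ≤ ‖D (w m)‖ := by
      have := hΘ (u m)
      simpa using this
    have h3 : ‖Pu (u (m + 1) - D (u m))‖ ≤ K * (c * ‖u m‖) := by
      refine le_trans (hKu _) ?_
      exact mul_le_mul_of_nonneg_left (he m) (by linarith)
    nlinarith
  -- Step 1: the unstable part never dominates
  have hKcnn : 0 ≤ K * c := by positivity
  have claimA : ∀ m, ‖w m‖ ≤ ‖s m‖ := by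
    by_contra hcon
    push_neg at hcon
    obtain ⟨m, hm⟩ := hcon
    have grow : ∀ j, ‖s (m + j)‖ < ‖w (m + j)‖ ∧ 2 ^ j * ‖w m‖ ≤ ‖w (m + j)‖ := by
      intro j
      induction j with
      | zero => exact ⟨hm, by simp⟩
      | succ j ih =>
          obtain ⟨ih1, ih2⟩ := ih
          set n := m + j with hn
          have hwpos : 0 < ‖w n‖ := lt_of_le_of_lt (norm_nonneg _) ih1
          have hun : ‖u n‖ ≤ 2 * ‖w n‖ := by
            calc ‖u n‖ ≤ ‖s n‖ + ‖w n‖ := hnorm_u n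
              _ ≤ 2 * ‖w n‖ := by linarith
          have hwgrow : 2 * ‖w n‖ ≤ ‖w (n + 1)‖ := by
            have := hw_bound n
            nlinarith
          have hsless : ‖s (n + 1)‖ < ‖w (n + 1)‖ := by
            have hsb := hs_bound n
            have : ‖s (n + 1)‖ ≤ (θ + 2 * K * c) * ‖w n‖ := by nlinarith
            have h12 : (θ + 2 * K * c) * ‖w n‖ ≤ (1 / 2) * ‖w n‖ :=
              mul_le_mul_of_nonneg_right hsmall1 (le_of_lt hwpos)
            nlinarith
          constructor
          · have : m + (j + 1) = n + 1 := by omega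
            rw [this]
            exact hsless
          · have : m + (j + 1) = n + 1 := by omega
            rw [this]
            calc (2 : ℝ) ^ (j + 1) * ‖w m‖ = 2 * (2 ^ j * ‖w m‖) := by ring
              _ ≤ 2 * ‖w n‖ := by
                  refine mul_le_mul_of_nonneg_left ?_ (by norm_num)
                  exact ih2
              _ ≤ ‖w (n + 1)‖ := hwgrow
    have hwm_pos : 0 < ‖w m‖ := lt_of_le_of_lt (norm_nonneg _) (grow 0).1
    obtain ⟨j, hj⟩ := pow_unbounded_of_one_lt ((K * ρ + 1) / ‖w m‖) (by norm_num : (1:ℝ) < 2)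
    have hbound : ‖w (m + j)‖ ≤ K * ρ := by
      calc ‖w (m + j)‖ ≤ K * ‖u (m + j)‖ := hKu _
        _ ≤ K * ρ := mul_le_mul_of_nonneg_left (hball _) (by linarith)
    have := (grow j).2
    have h2j : (K * ρ + 1) < 2 ^ j * ‖w m‖ := by
      rw [div_lt_iff₀ hwm_pos] at hj
      linarith
    linarith
  -- Step 2: geometric decay of the stable part
  have hdecay : ∀ m, ‖s (m + 1)‖ ≤ (1 / 2) * ‖s m‖ := by
    intro m
    have hsb := hs_bound m
    have hun : ‖u m‖ ≤ 2 * ‖s m‖ := by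
      have := hnorm_u m
      have := claimA m
      linarith
    have hsn : 0 ≤ ‖s m‖ := norm_nonneg _
    nlinarith
  have hgeo : ∀ m, ‖s m‖ ≤ (1 / 2) ^ m * ‖s 0‖ := by
    intro m
    induction m with
    | zero => simp
    | succ m ih =>
        calc ‖s (m + 1)‖ ≤ (1 / 2) * ‖s m‖ := hdecay m
          _ ≤ (1 / 2) * ((1 / 2) ^ m * ‖s 0‖) := by linarith
          _ = (1 / 2) ^ (m + 1) * ‖s 0‖ := by ring
  have hu_decay : ∀ m, ‖u m‖ ≤ 2 * ((1 / 2) ^ m * ‖s 0‖) := by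
    intro m
    have h1 := hnorm_u m
    have h2 := claimA m
    have h3 := hgeo m
    linarith
  have htend : Tendsto (fun m => ‖u m‖) atTop (𝓝 0) := by
    have hgeo_tend : Tendsto (fun m : ℕ => 2 * ((1 / 2 : ℝ) ^ m * ‖s 0‖)) atTop (𝓝 0) := by
      have := tendsto_pow_atTop_nhds_zero_of_lt_one (by norm_num : (0:ℝ) ≤ 1/2)
        (by norm_num : (1/2 : ℝ) < 1)
      have := this.mul_const (‖s 0‖)
      have := this.const_mul (2 : ℝ)
      simpa using this
    exact squeeze_zero (fun m => norm_nonneg _) hu_decay hgeo_tend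
  have : Tendsto (fun m => dist (x m) xs) atTop (𝓝 0) := by
    simpa [dist_eq_norm] using htend
  exact tendsto_iff_dist_tendsto_zero.mpr this



section ManifoldAux

lemma aux_contMDiff_iterate [IsManifold (𝓡 d) (⊤ : ℕ∞) M] {g : M → M}
    (hg : ContMDiff (𝓡 d) (𝓡 d) (⊤ : ℕ∞) g) (n : ℕ) :
    ContMDiff (𝓡 d) (𝓡 d) (⊤ : ℕ∞) (g^[n]) := by
  induction n with
  | zero => simpa using contMDiff_id
  | succ n ih =>
      rw [Function.iterate_succ']
      exact hg.comp ih

lemma aux_hasMFDerivAt_iterate [IsManifold (𝓡 d) (⊤ : ℕ∞) M] {g : M → M}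
    {p : M} (hp : g p = p)
    (A : EuclideanSpace ℝ (Fin d) →L[ℝ] EuclideanSpace ℝ (Fin d))
    (hA : HasMFDerivAt (𝓡 d) (𝓡 d) g p A) (n : ℕ) :
    HasMFDerivAt (𝓡 d) (𝓡 d) (g^[n]) p (A ^ n) := by
  induction n with
  | zero =>
      have h0 : (A ^ 0 : EuclideanSpace ℝ (Fin d) →L[ℝ] EuclideanSpace ℝ (Fin d)) =
          ContinuousLinearMap.id ℝ (EuclideanSpace ℝ (Fin d)) := by
        rw [pow_zero]; rfl
      rw [Function.iterate_zero, h0]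
      exact hasMFDerivAt_id _
  | succ n ih =>
      have hfix : g^[n] p = p := Function.iterate_fixed hp n
      have hA' : HasMFDerivAt (𝓡 d) (𝓡 d) g (g^[n] p) A := by rw [hfix]; exact hA
      have hcomp := hA'.comp p ih
      rw [Function.iterate_succ']
      have hpow : (A ^ (n + 1) : EuclideanSpace ℝ (Fin d) →L[ℝ] EuclideanSpace ℝ (Fin d)) =
          A.comp (A ^ n) := by
        rw [pow_succ']; rfl
      rw [hpow]
      exact hcomp

lemma aux_stableSet_upgrade {g : M → M} (hg : Continuous g) {p y : M} {K0 : ℕ} (hK0 : 0 < K0)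
    (hfix : ∀ m : ℕ, g^[K0 * m] p = p)
    (htend : Tendsto (fun m : ℕ => g^[K0 * m] y) atTop (𝓝 p)) :
    y ∈ stableSet g p := by
  show Tendsto _ atTop (𝓝 0)
  rw [Metric.tendsto_atTop]
  intro ε hε
  have hr : ∀ r : ℕ, ∃ Mr : ℕ, ∀ m ≥ Mr, dist (g^[r] (g^[K0 * m] y)) (g^[r] p) < ε := by
    intro r
    have h1 : Tendsto (fun m : ℕ => g^[r] (g^[K0 * m] y)) atTop (𝓝 (g^[r] p)) :=
      ((hg.iterate r).continuousAt.tendsto).comp htend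
    have h2 : Tendsto (fun m : ℕ => dist (g^[r] (g^[K0 * m] y)) (g^[r] p)) atTop (𝓝 0) := by
      have := h1.dist (tendsto_const_nhds (x := g^[r] p))
      simpa using this
    exact eventually_atTop.mp (h2.eventually_lt_const hε)
  choose Mf hMf using hr
  set S := (Finset.range K0).sup Mf with hS
  refine ⟨K0 * (S + 1), fun n hn => ?_⟩
  have hrK : n % K0 < K0 := Nat.mod_lt _ hK0
  have hmS : S + 1 ≤ n / K0 := by
    have h := Nat.div_le_div_right (c := K0) hn
    rwa [Nat.mul_div_cancel_left _ hK0] at h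
  have hMr : Mf (n % K0) ≤ S := Finset.le_sup (Finset.mem_range.mpr hrK)
  have hmain := hMf (n % K0) (n / K0) (by omega)
  have hn_eq : K0 * (n / K0) + n % K0 = n := Nat.div_add_mod n K0
  have e1 : g^[n] y = g^[n % K0] (g^[K0 * (n / K0)] y) := by
    rw [← Function.iterate_add_apply]
    congr 1
    omega
  have e2 : g^[n] p = g^[n % K0] p := by
    conv_lhs => rw [← hn_eq]
    rw [add_comm, Function.iterate_add_apply, hfix]
  rw [Real.dist_0_eq_abs, abs_of_nonneg dist_nonneg, e1, e2]
  exact hmain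


lemma aux_pow_invariant {A : EuclideanSpace ℝ (Fin d) →L[ℝ] EuclideanSpace ℝ (Fin d)}
    {Es : Submodule ℝ (EuclideanSpace ℝ (Fin d))} (hinv : ∀ v ∈ Es, A v ∈ Es) (n : ℕ) :
    ∀ v ∈ Es, (A ^ n) v ∈ Es := by
  induction n with
  | zero => intro v hv; simpa using hv
  | succ n ih =>
      intro v hv
      rw [pow_succ', ContinuousLinearMap.mul_apply]
      exact hinv _ (ih v hv)

/-- Near a hyperbolic periodic point, an orbit that stays uniformly close to the orbit of the
periodic point lies in its stable set. -/
lemma aux_stable_of_bounded [IsManifold (𝓡 d) (⊤ : ℕ∞) M] {g : M → M}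
    (hg : ContMDiff (𝓡 d) (𝓡 d) (⊤ : ℕ∞) g) {p : M} {k : ℕ}
    (hhyp : IsHyperbolicPeriodicPt (d := d) g p k) :
    ∃ ε0 > (0 : ℝ), ∀ y : M, (∀ n : ℕ, dist (g^[n] y) (g^[n] p) ≤ ε0) →
      y ∈ stableSet g p := by
  classical
  obtain ⟨hk, hp, hmain⟩ := hhyp
  set A : EuclideanSpace ℝ (Fin d) →L[ℝ] EuclideanSpace ℝ (Fin d) :=
    mfderiv (𝓡 d) (𝓡 d) (g^[k]) p with hA
  obtain ⟨Es, Eu, C, lam, hcompl, hC, hlam0, hlam1, hinvS, hinvU, hbS, hbU⟩ := hmain A hA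
  -- projections
  set Ps : EuclideanSpace ℝ (Fin d) →L[ℝ] EuclideanSpace ℝ (Fin d) :=
    LinearMap.toContinuousLinearMap (Es.subtype.comp (Es.linearProjOfIsCompl Eu hcompl)) with hPs
  set Pu : EuclideanSpace ℝ (Fin d) →L[ℝ] EuclideanSpace ℝ (Fin d) :=
    LinearMap.toContinuousLinearMap (Eu.subtype.comp (Eu.linearProjOfIsCompl Es hcompl.symm))
    with hPu
  have hPs_apply : ∀ v, Ps v = (Es.linearProjOfIsCompl Eu hcompl v : EuclideanSpace ℝ (Fin d)) :=
    fun v => rfl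
  have hPu_apply : ∀ v, Pu v =
      (Eu.linearProjOfIsCompl Es hcompl.symm v : EuclideanSpace ℝ (Fin d)) := fun v => rfl
  have hsum : ∀ v, Ps v + Pu v = v := by
    intro v
    rw [hPs_apply, hPu_apply]
    exact Submodule.projection_add_projection_eq_self hcompl v
  have hPs_mem : ∀ v, Ps v ∈ Es := fun v => by rw [hPs_apply]; exact Subtype.coe_prop _
  have hPu_mem : ∀ v, Pu v ∈ Eu := fun v => by rw [hPu_apply]; exact Subtype.coe_prop _
  have hPs_left : ∀ v ∈ Es, Ps v = v := by
    intro v hv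
    rw [hPs_apply]
    exact congrArg _ (Submodule.linearProjOfIsCompl_apply_left hcompl ⟨v, hv⟩)
  have hPs_right : ∀ v ∈ Eu, Ps v = 0 := by
    intro v hv
    rw [hPs_apply, show Es.linearProjOfIsCompl Eu hcompl v = 0 from
      Submodule.linearProjOfIsCompl_apply_right' hcompl hv]
    rfl
  have hPu_left : ∀ v ∈ Eu, Pu v = v := by
    intro v hv
    rw [hPu_apply]
    exact congrArg _ (Submodule.linearProjOfIsCompl_apply_left hcompl.symm ⟨v, hv⟩)
  have hPu_right : ∀ v ∈ Es, Pu v = 0 := by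
    intro v hv
    rw [hPu_apply, show Eu.linearProjOfIsCompl Es hcompl.symm v = 0 from
      Submodule.linearProjOfIsCompl_apply_right' hcompl.symm hv]
    rfl
  -- the constant K
  set K : ℝ := max ‖Ps‖ ‖Pu‖ + 1 with hKdef
  have hK1 : 1 ≤ K := by
    have : (0:ℝ) ≤ max ‖Ps‖ ‖Pu‖ := le_max_of_le_left (norm_nonneg _)
    linarith
  have hKs : ∀ v, ‖Ps v‖ ≤ K * ‖v‖ := by
    intro v
    refine le_trans (Ps.le_opNorm v) ?_
    have h1 : ‖Ps‖ ≤ K := by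
      have := le_max_left ‖Ps‖ ‖Pu‖
      linarith
    exact mul_le_mul_of_nonneg_right h1 (norm_nonneg _)
  have hKu : ∀ v, ‖Pu v‖ ≤ K * ‖v‖ := by
    intro v
    refine le_trans (Pu.le_opNorm v) ?_
    have h1 : ‖Pu‖ ≤ K := by
      have := le_max_right ‖Ps‖ ‖Pu‖
      linarith
    exact mul_le_mul_of_nonneg_right h1 (norm_nonneg _)
  -- choose the power N
  have htend0 : Tendsto (fun n : ℕ => C * lam ^ n) atTop (𝓝 0) := by
    have h := (tendsto_pow_atTop_nhds_zero_of_lt_one hlam0.le hlam1).const_mul C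
    simpa using h
  obtain ⟨N, hNsm, hN1⟩ :=
    ((htend0.eventually_lt_const (by norm_num : (0:ℝ) < 1/4)).and (eventually_ge_atTop 1)).exists
  set θ : ℝ := C * lam ^ N with hθdef
  have hθpos : 0 < θ := by positivity
  have hθ4 : θ ≤ 1 / 4 := le_of_lt hNsm
  set Θ : ℝ := C⁻¹ * (lam ^ N)⁻¹ with hΘdef
  have hΘeq : Θ = θ⁻¹ := by rw [hΘdef, hθdef, mul_inv]
  have hΘ4 : 4 ≤ Θ := by
    rw [hΘeq]
    have h := inv_anti₀ hθpos hθ4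
    simpa using h
  set c : ℝ := 1 / (8 * K) with hcdef
  have hcpos : 0 < c := by rw [hcdef]; positivity
  have hKc : 2 * K * c = 1 / 4 := by
    rw [hcdef]
    field_simp
    ring
  have hsmall1 : θ + 2 * K * c ≤ 1 / 2 := by rw [hKc]; linarith
  have hsmall2 : 2 ≤ Θ - 2 * K * c := by rw [hKc]; linarith
  -- invariance of the splitting under D := A ^ N
  set D : EuclideanSpace ℝ (Fin d) →L[ℝ] EuclideanSpace ℝ (Fin d) := A ^ N with hDdef
  have hDs_mem : ∀ v ∈ Es, D v ∈ Es := fun v hv => aux_pow_invariant hinvS N v hv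
  have hDu_mem : ∀ v ∈ Eu, D v ∈ Eu := fun v hv => aux_pow_invariant hinvU N v hv
  have hcomm_s : ∀ v, Ps (D v) = D (Ps v) := by
    intro v
    have hv : D v = D (Ps v) + D (Pu v) := by rw [← map_add, hsum]
    rw [hv, map_add, hPs_left _ (hDs_mem _ (hPs_mem v)), hPs_right _ (hDu_mem _ (hPu_mem v)),
      add_zero]
  have hcomm_u : ∀ v, Pu (D v) = D (Pu v) := by
    intro v
    have hv : D v = D (Ps v) + D (Pu v) := by rw [← map_add, hsum]
    rw [hv, map_add, hPu_right _ (hDs_mem _ (hPs_mem v)), hPu_left _ (hDu_mem _ (hPu_mem v)),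
      zero_add]
  have hθbound : ∀ v, ‖D (Ps v)‖ ≤ θ * ‖Ps v‖ := fun v => hbS N (Ps v) (hPs_mem v)
  have hΘbound : ∀ v, Θ * ‖Pu v‖ ≤ ‖D (Pu v)‖ := fun v => by
    have := hbU N (Pu v) (hPu_mem v)
    rw [hΘdef]
    linarith
  -- the iterated map and its derivative in the chart
  set K0 : ℕ := k * N with hK0def
  have hK0pos : 0 < K0 := by positivity
  set G : M → M := g^[K0] with hGdef
  have hGeq : G = (g^[k])^[N] := by rw [hGdef, hK0def, Function.iterate_mul]
  have hGfix : G p = p := by rw [hGeq]; exact Function.iterate_fixed hp N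
  have hGk_smooth : ContMDiff (𝓡 d) (𝓡 d) (⊤ : ℕ∞) (g^[k]) := aux_contMDiff_iterate hg k
  have hAk : HasMFDerivAt (𝓡 d) (𝓡 d) (g^[k]) p A :=
    (hGk_smooth.mdifferentiableAt (by simp)).hasMFDerivAt
  have hDG : HasMFDerivAt (𝓡 d) (𝓡 d) G p D := by
    rw [hGeq, hDdef]
    exact aux_hasMFDerivAt_iterate hp A hAk N
  set φ := extChartAt (𝓡 d) p with hφdef
  set h : EuclideanSpace ℝ (Fin d) → EuclideanSpace ℝ (Fin d) := ↑φ ∘ G ∘ ↑φ.symm with hhdef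
  have hrange : Set.range (𝓡 d) = (Set.univ : Set (EuclideanSpace ℝ (Fin d))) :=
    ModelWithCorners.range_eq_univ _
  -- smoothness of the chart representative
  have hGsm : ContMDiffAt (𝓡 d) (𝓡 d) (⊤ : ℕ∞) G p := by
    rw [hGdef]
    exact (aux_contMDiff_iterate hg K0).contMDiffAt
  have hrep := (contMDiffAt_iff.mp hGsm).2
  rw [hGfix, hrange, contDiffWithinAt_univ] at hrep
  have hstrict := hrep.hasStrictFDerivAt (by simp)
  -- identify the derivative of the representative
  have hfd : HasFDerivAt h D (φ p) := by
    have h2 := hDG.2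
    rw [hrange] at h2
    replace h2 := hasFDerivWithinAt_univ.mp h2
    unfold writtenInExtChartAt at h2
    rw [hGfix] at h2
    exact h2
  rw [hfd.fderiv] at hstrict
  -- get the approximate linearization on a small ball
  obtain ⟨s, hs_nhds, happrox⟩ :=
    hstrict.approximates_deriv_on_nhds (Or.inr (Real.toNNReal_pos.mpr hcpos))
  obtain ⟨ρ', hρ'pos, hρ'sub⟩ := Metric.mem_nhds_iff.mp hs_nhds
  set ρ : ℝ := ρ' / 2 with hρdef
  have hρpos : 0 < ρ := by positivity
  have hballs : Metric.closedBall (φ p) ρ ⊆ s :=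
    le_trans (Metric.closedBall_subset_ball (by linarith)) hρ'sub
  -- choose ε0
  have hsrc : (extChartAt (𝓡 d) p).source ∈ 𝓝 p := extChartAt_source_mem_nhds p
  have hpre : ⇑φ ⁻¹' Metric.closedBall (φ p) ρ ∈ 𝓝 p :=
    (continuousAt_extChartAt p).preimage_mem_nhds (Metric.closedBall_mem_nhds _ hρpos)
  obtain ⟨ε', hε'pos, hε'sub⟩ := Metric.mem_nhds_iff.mp (Filter.inter_mem hsrc hpre)
  refine ⟨ε' / 2, by positivity, fun y hy => ?_⟩
  -- the orbit stays in the chart ball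
  have horbit : ∀ m : ℕ, G^[m] y ∈ (extChartAt (𝓡 d) p).source ∩
      ⇑φ ⁻¹' Metric.closedBall (φ p) ρ := by
    intro m
    apply hε'sub
    have h1 := hy (K0 * m)
    have e1 : g^[K0 * m] y = G^[m] y := by rw [hGdef, Function.iterate_mul]
    have e2 : g^[K0 * m] p = p := by
      rw [Function.iterate_mul]
      exact Function.iterate_fixed hGfix m
    rw [e1, e2] at h1
    exact Metric.mem_ball.mpr (lt_of_le_of_lt h1 (by linarith))
  set x : ℕ → EuclideanSpace ℝ (Fin d) := fun m => φ (G^[m] y) with hxdef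
  have hx_ball : ∀ m, x m ∈ Metric.closedBall (φ p) ρ := fun m => (horbit m).2
  have hφp_ball : φ p ∈ Metric.closedBall (φ p) ρ := Metric.mem_closedBall_self hρpos.le
  have hx_succ : ∀ m, x (m + 1) = h (x m) := by
    intro m
    rw [hxdef, hhdef]
    simp only [Function.comp_apply]
    rw [φ.left_inv (horbit m).1, ← Function.iterate_succ_apply' G m y]
  have hhp : h (φ p) = φ p := by
    rw [hhdef]
    simp only [Function.comp_apply]
    rw [φ.left_inv (mem_extChartAt_source p), hGfix]
  have hstep : ∀ m, ‖x (m + 1) - φ p - D (x m - φ p)‖ ≤ c * ‖x m - φ p‖ := by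
    intro m
    have happ := happrox (x m) (hballs (hx_ball m)) (φ p) (hballs hφp_ball)
    rw [Real.coe_toNNReal c hcpos.le] at happ
    rw [hx_succ m]
    calc ‖h (x m) - φ p - D (x m - φ p)‖ = ‖h (x m) - h (φ p) - D (x m - φ p)‖ := by rw [hhp]
      _ ≤ c * ‖x m - φ p‖ := happ
  have hx_ball' : ∀ m, ‖x m - φ p‖ ≤ ρ := by
    intro m
    have := hx_ball m
    rwa [Metric.mem_closedBall, dist_eq_norm] at this
  -- apply the cone lemma
  have hxtend : Tendsto x atTop (𝓝 (φ p)) :=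
    aux_cone_lemma D Ps Pu K θ Θ c ρ hsum hcomm_s hcomm_u hθbound hΘbound hKs hKu hK1
      hθpos.le hcpos.le hρpos.le hsmall1 hsmall2 x (φ p) hx_ball' hstep
  -- transfer back to the manifold
  have hGy_tend : Tendsto (fun m : ℕ => G^[m] y) atTop (𝓝 p) := by
    have hsymm := ((continuousAt_extChartAt_symm p).tendsto).comp hxtend
    have hpp : φ.symm (φ p) = p := φ.left_inv (mem_extChartAt_source p)
    rw [hpp] at hsymm
    refine hsymm.congr fun m => ?_
    show φ.symm (x m) = G^[m] y
    rw [hxdef]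
    exact φ.left_inv (horbit m).1
  -- upgrade to the full stable set
  refine aux_stableSet_upgrade (hg.continuous) hK0pos ?_ ?_
  · intro m
    rw [Function.iterate_mul]
    exact Function.iterate_fixed hGfix m
  · have e1 : ∀ m, g^[K0 * m] y = G^[m] y := by
      intro m
      rw [hGdef, Function.iterate_mul]
    exact hGy_tend.congr fun m => (e1 m).symm


/-- Hyperbolicity of a periodic point transfers to the inverse diffeomorphism. -/
lemma aux_symm_hyperbolic [IsManifold (𝓡 d) (⊤ : ℕ∞) M]
    (f : Diffeomorph (𝓡 d) (𝓡 d) M M (⊤ : ℕ∞)) (p : M) (k : ℕ) (hk : 0 < k)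
    (hp : (⇑f)^[k] p = p) (hhyp : IsHyperbolicPeriodicPt (d := d) ⇑f p k) :
    IsHyperbolicPeriodicPt (d := d) ⇑f.symm p k := by
  classical
  obtain ⟨-, -, hmain⟩ := hhyp
  have hli : Function.LeftInverse ⇑f.symm ⇑f := fun x => f.symm_apply_apply x
  have hri : Function.LeftInverse ⇑f ⇑f.symm := fun x => f.apply_symm_apply x
  have hpsymm : (⇑f.symm)^[k] p = p := by
    conv_lhs => rw [← hp]
    exact (hli.iterate k) p
  refine ⟨hk, hpsymm, ?_⟩
  intro B hB
  set A : EuclideanSpace ℝ (Fin d) →L[ℝ] EuclideanSpace ℝ (Fin d) :=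
    mfderiv (𝓡 d) (𝓡 d) ((⇑f)^[k]) p with hA
  obtain ⟨Es, Eu, C, lam, hcompl, hC, hlam0, hlam1, hinvS, hinvU, hbS, hbU⟩ := hmain A hA
  have hsmf : ContMDiff (𝓡 d) (𝓡 d) (⊤ : ℕ∞) ((⇑f)^[k]) := aux_contMDiff_iterate f.contMDiff k
  have hsms : ContMDiff (𝓡 d) (𝓡 d) (⊤ : ℕ∞) ((⇑f.symm)^[k]) :=
    aux_contMDiff_iterate f.symm.contMDiff k
  have hAd : HasMFDerivAt (𝓡 d) (𝓡 d) ((⇑f)^[k]) p A :=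
    (hsmf.mdifferentiableAt (by simp)).hasMFDerivAt
  have hBd : HasMFDerivAt (𝓡 d) (𝓡 d) ((⇑f.symm)^[k]) p B := by
    rw [hB]
    exact (hsms.mdifferentiableAt (by simp)).hasMFDerivAt
  -- B * A = 1
  have hBA : B * A = 1 := by
    have hBd' : HasMFDerivAt (𝓡 d) (𝓡 d) ((⇑f.symm)^[k]) ((⇑f)^[k] p) B := by
      rw [hp]; exact hBd
    have hcomp := hBd'.comp p hAd
    have hid : (⇑f.symm)^[k] ∘ (⇑f)^[k] = id := funext fun x => (hli.iterate k) x
    rw [hid] at hcomp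
    have hid' := hasMFDerivAt_id (I := 𝓡 d) (x := p)
    have := hcomp.mfderiv
    rw [hid'.mfderiv] at this
    rw [ContinuousLinearMap.mul_def]
    exact this.symm
  -- A * B = 1
  have hAB : A * B = 1 := by
    have hAd' : HasMFDerivAt (𝓡 d) (𝓡 d) ((⇑f)^[k]) ((⇑f.symm)^[k] p) A := by
      rw [hpsymm]; exact hAd
    have hcomp := hAd'.comp p hBd
    have hid : (⇑f)^[k] ∘ (⇑f.symm)^[k] = id := funext fun x => (hri.iterate k) x
    rw [hid] at hcomp
    have hid' := hasMFDerivAt_id (I := 𝓡 d) (x := p)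
    have := hcomp.mfderiv
    rw [hid'.mfderiv] at this
    rw [ContinuousLinearMap.mul_def]
    exact this.symm
  have hABpow : ∀ n : ℕ, (A ^ n) * (B ^ n) = 1 := by
    intro n
    induction n with
    | zero => simp
    | succ n ih =>
        rw [pow_succ, pow_succ', mul_assoc, ← mul_assoc A B, hAB, one_mul, ih]
  have hABapply : ∀ (n : ℕ) (v), (A ^ n) ((B ^ n) v) = v := by
    intro n v
    rw [← ContinuousLinearMap.mul_apply, hABpow n, ContinuousLinearMap.one_apply]
  -- invariance of the splitting under B
  have hdisj : ∀ v, v ∈ Es → v ∈ Eu → v = 0 := by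
    intro v h1 h2
    exact (Submodule.disjoint_def.mp hcompl.disjoint) v h1 h2
  have hBzero : ∀ v, A v = 0 → v = 0 := by
    intro v hv
    have : (B * A) v = v := by rw [hBA, ContinuousLinearMap.one_apply]
    rw [ContinuousLinearMap.mul_apply, hv, map_zero] at this
    exact this.symm
  have hBu_mem : ∀ v ∈ Eu, B v ∈ Eu := by
    intro v hv
    set s : EuclideanSpace ℝ (Fin d) := (Es.linearProjOfIsCompl Eu hcompl (B v) :
      EuclideanSpace ℝ (Fin d)) with hsdef
    set u : EuclideanSpace ℝ (Fin d) := (Eu.linearProjOfIsCompl Es hcompl.symm (B v) :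
      EuclideanSpace ℝ (Fin d)) with hudef
    have hs_mem : s ∈ Es := Subtype.coe_prop _
    have hu_mem : u ∈ Eu := Subtype.coe_prop _
    have hsumv : s + u = B v := Submodule.projection_add_projection_eq_self hcompl (B v)
    have hABv : A (B v) = v := by
      have := hABapply 1 v
      simpa [pow_one] using this
    have hAs : A s = v - A u := by
      have h : A s + A u = v := by rw [← map_add, hsumv, hABv]
      exact eq_sub_of_add_eq h
    have hAs_mem_u : A s ∈ Eu := by
      rw [hAs]
      exact Submodule.sub_mem _ hv (hinvU u hu_mem)
    have hAs_mem_s : A s ∈ Es := hinvS s hs_mem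
    have hAs0 : A s = 0 := hdisj _ hAs_mem_s hAs_mem_u
    have hs0 : s = 0 := hBzero s hAs0
    have : B v = u := by rw [← hsumv, hs0, zero_add]
    rw [this]
    exact hu_mem
  have hBs_mem : ∀ v ∈ Es, B v ∈ Es := by
    intro v hv
    set s : EuclideanSpace ℝ (Fin d) := (Es.linearProjOfIsCompl Eu hcompl (B v) :
      EuclideanSpace ℝ (Fin d)) with hsdef
    set u : EuclideanSpace ℝ (Fin d) := (Eu.linearProjOfIsCompl Es hcompl.symm (B v) :
      EuclideanSpace ℝ (Fin d)) with hudef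
    have hs_mem : s ∈ Es := Subtype.coe_prop _
    have hu_mem : u ∈ Eu := Subtype.coe_prop _
    have hsumv : s + u = B v := Submodule.projection_add_projection_eq_self hcompl (B v)
    have hABv : A (B v) = v := by
      have := hABapply 1 v
      simpa [pow_one] using this
    have hAu : A u = v - A s := by
      have h : A u + A s = v := by rw [add_comm, ← map_add, hsumv, hABv]
      exact eq_sub_of_add_eq h
    have hAu_mem_s : A u ∈ Es := by
      rw [hAu]
      exact Submodule.sub_mem _ hv (hinvS s hs_mem)
    have hAu_mem_u : A u ∈ Eu := hinvU u hu_mem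
    have hAu0 : A u = 0 := hdisj _ hAu_mem_s hAu_mem_u
    have hu0 : u = 0 := hBzero u hAu0
    have : B v = s := by rw [← hsumv, hu0, add_zero]
    rw [this]
    exact hs_mem
  refine ⟨Eu, Es, C, lam, hcompl.symm, hC, hlam0, hlam1, hBu_mem, hBs_mem, ?_, ?_⟩
  · -- contraction on Eu for B
    intro n v hv
    have hmem : (B ^ n) v ∈ Eu := aux_pow_invariant hBu_mem n v hv
    have h1 := hbU n ((B ^ n) v) hmem
    rw [hABapply n v] at h1
    have hpos : (0:ℝ) < C * lam ^ n := by positivity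
    have h2 : (C * lam ^ n)⁻¹ * ‖(B ^ n) v‖ ≤ ‖v‖ := by
      rw [mul_inv]
      linarith
    have h3 := mul_le_mul_of_nonneg_left h2 hpos.le
    rwa [← mul_assoc, mul_inv_cancel₀ hpos.ne', one_mul] at h3
  · -- expansion on Es for B
    intro n v hv
    have hmem : (B ^ n) v ∈ Es := aux_pow_invariant hBs_mem n v hv
    have h1 := hbS n ((B ^ n) v) hmem
    rw [hABapply n v] at h1
    have hpos : (0:ℝ) < C * lam ^ n := by positivity
    have h3 := mul_le_mul_of_nonneg_left h1 (inv_nonneg.mpr hpos.le)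
    rw [← mul_assoc, inv_mul_cancel₀ hpos.ne', one_mul] at h3
    calc C⁻¹ * (lam ^ n)⁻¹ * ‖v‖ = (C * lam ^ n)⁻¹ * ‖v‖ := by rw [mul_inv]
      _ ≤ ‖(B ^ n) v‖ := h3

end ManifoldAux


lemma aux_shift_stable (F : M ≃ M) (w q : M) (t : ℕ) (hw : w ∈ stableSet ⇑F q) :
    (F ^ (-(t : ℤ))) w ∈ stableSet ⇑F ((F ^ (-(t : ℤ))) q) := by
  have hw' : Tendsto (fun n : ℕ => dist ((⇑F)^[n] w) ((⇑F)^[n] q)) atTop (𝓝 0) := hw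
  show Tendsto _ atTop (𝓝 0)
  rw [Metric.tendsto_atTop] at hw' ⊢
  intro ε hε
  obtain ⟨N, hN⟩ := hw' ε hε
  refine ⟨N + t, fun n hn => ?_⟩
  have hcast : ((n : ℤ) + -(t : ℤ)) = ((n - t : ℕ) : ℤ) := by omega
  have e1 : (⇑F)^[n] ((F ^ (-(t : ℤ))) w) = (⇑F)^[n - t] w := by
    rw [← aux_pow_apply F n, ← aux_zpow_add_apply, hcast, aux_pow_apply]
  have e2 : (⇑F)^[n] ((F ^ (-(t : ℤ))) q) = (⇑F)^[n - t] q := by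
    rw [← aux_pow_apply F n, ← aux_zpow_add_apply, hcast, aux_pow_apply]
  rw [e1, e2]
  exact hN (n - t) (by omega)

end Aux


/-- For a Kupka–Smale diffeomorphism of a compact manifold with the
shadowing property, a chain transitive class containing a periodic point `p` equals the
homoclinic class of `p`. -/
theorem chainClass_eq_homoclinicClass [IsManifold (𝓡 d) (⊤ : ℕ∞) M]
    (f : Diffeomorph (𝓡 d) (𝓡 d) M M (⊤ : ℕ∞))
    (hKS : KupkaSmale (d := d) f.toEquiv)
    (hsh : ShadowingProperty f.toEquiv)
    (p : M) (k : ℕ) (hk : 0 < k) (hp : (⇑f.toEquiv)^[k] p = p)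
    (Λ : Set M) (hΛ : Λ = chainClass ⇑f.toEquiv p) :
    Λ = homoclinicClass (d := d) f.toEquiv p := by
  classical
  subst hΛ
  set F : M ≃ M := f.toEquiv with hFdef
  apply Set.Subset.antisymm
  · -- chain class ⊆ homoclinic class
    intro x hx
    have hpf : (⇑f)^[k] p = p := hp
    have hhypf : IsHyperbolicPeriodicPt (d := d) ⇑f p k := hKS.1 p k hk hp
    obtain ⟨ε0f, hε0f, hstabf⟩ := aux_stable_of_bounded f.contMDiff hhypf
    have hhypb : IsHyperbolicPeriodicPt (d := d) ⇑f.symm p k :=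
      aux_symm_hyperbolic f p k hk hpf hhypf
    obtain ⟨ε0b, hε0b, hstabb⟩ := aux_stable_of_bounded f.symm.contMDiff hhypb
    unfold homoclinicClass
    rw [Metric.mem_closure_iff]
    intro ε hε
    set ε1 : ℝ := min (ε / 2) (min ε0f ε0b) with hε1def
    have hε1pos : 0 < ε1 := lt_min (by positivity) (lt_min hε0f hε0b)
    obtain ⟨δ, hδpos, hshad⟩ := hsh ε1 hε1pos
    obtain ⟨⟨n2, hm2, c2, hc20, hc2n, hc2s⟩, ⟨n1, hm1, c1, hc10, hc1n, hc1s⟩⟩ := hx δ hδpos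
    set ξ : ℤ → M := fun n =>
      if n ≤ -(n1 : ℤ) then (F ^ (n + n1)) p
      else if n ≤ 0 then c1 (n + n1).toNat
      else if n ≤ (n2 : ℤ) then c2 n.toNat
      else (F ^ (n - n2)) p with hξdef
    have hξ_le : ∀ n : ℤ, n ≤ -(n1 : ℤ) → ξ n = (F ^ (n + n1)) p := by
      intro n hn; simp only [hξdef]; rw [if_pos hn]
    have hξ_mid1 : ∀ n : ℤ, -(n1 : ℤ) < n → n ≤ 0 → ξ n = c1 (n + n1).toNat := by
      intro n h1 h2; simp only [hξdef]; rw [if_neg (by omega), if_pos h2]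
    have hξ_mid2 : ∀ n : ℤ, 0 < n → n ≤ (n2 : ℤ) → ξ n = c2 n.toNat := by
      intro n h1 h2; simp only [hξdef]; rw [if_neg (by omega), if_neg (by omega), if_pos h2]
    have hξ_ge : ∀ n : ℤ, (n2 : ℤ) < n → ξ n = (F ^ (n - n2)) p := by
      intro n h1; simp only [hξdef]
      rw [if_neg (by omega), if_neg (by omega), if_neg (by omega)]
    have hstep : ∀ n : ℤ, dist (F (ξ n)) (ξ (n + 1)) < δ := by
      intro n
      by_cases hA : n + 1 ≤ -(n1 : ℤ)
      · rw [hξ_le n (by omega), hξ_le (n + 1) hA]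
        have e := aux_zpow_add_apply F 1 (n + n1) p
        rw [zpow_one] at e
        rw [← e, show (1 : ℤ) + (n + n1) = n + 1 + n1 by ring]
        simpa using hδpos
      · by_cases hB : n ≤ -(n1 : ℤ)
        · have hn : n = -(n1 : ℤ) := by omega
          rw [hξ_le n hB, hξ_mid1 (n + 1) (by omega) (by omega)]
          have e0 : (F ^ (n + n1)) p = p := by rw [hn]; simp
          have e1 : ((n + 1 + n1 : ℤ)).toNat = 1 := by omega
          rw [e0, e1, ← hc10]
          exact hc1s 0 hm1
        · by_cases hC : n + 1 ≤ 0
          · rw [hξ_mid1 n (by omega) (by omega), hξ_mid1 (n + 1) (by omega) hC]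
            have e1 : ((n + 1 + n1 : ℤ)).toNat = (n + n1).toNat + 1 := by omega
            rw [e1]
            exact hc1s (n + n1).toNat (by omega)
          · by_cases hD : n ≤ 0
            · have hn : n = 0 := by omega
              rw [hξ_mid1 n (by omega) hD, hξ_mid2 (n + 1) (by omega) (by omega)]
              have e0 : ((n + n1 : ℤ)).toNat = n1 := by omega
              have e1 : ((n + 1 : ℤ)).toNat = 1 := by omega
              rw [e0, e1, hc1n, ← hc20]
              exact hc2s 0 hm2
            · by_cases hE : n + 1 ≤ (n2 : ℤ)
              · rw [hξ_mid2 n (by omega) (by omega), hξ_mid2 (n + 1) (by omega) hE]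
                have e1 : ((n + 1 : ℤ)).toNat = n.toNat + 1 := by omega
                rw [e1]
                exact hc2s n.toNat (by omega)
              · by_cases hF : n ≤ (n2 : ℤ)
                · have hn : n = (n2 : ℤ) := by omega
                  rw [hξ_mid2 n (by omega) hF, hξ_ge (n + 1) (by omega)]
                  have e0 : n.toNat = n2 := by omega
                  have e1 : (F ^ (n + 1 - n2)) p = F p := by
                    rw [show n + 1 - (n2 : ℤ) = 1 by omega, zpow_one]
                  rw [e0, e1, hc2n]
                  simpa using hδpos
                · rw [hξ_ge n (by omega), hξ_ge (n + 1) (by omega)]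
                  have e := aux_zpow_add_apply F 1 (n - n2) p
                  rw [zpow_one] at e
                  rw [← e, show (1 : ℤ) + (n - n2) = n + 1 - n2 by ring]
                  simpa using hδpos
    obtain ⟨y, hy⟩ := hshad ξ hstep
    have hy0 : dist y x < ε1 := by
      have h := hy 0
      have e0 : (F ^ (0 : ℤ)) y = y := by simp
      have e1 : ξ 0 = x := by
        rw [hξ_mid1 0 (by omega) le_rfl]
        have e : ((0 : ℤ) + n1).toNat = n1 := by omega
        rw [e, hc1n]
      rwa [e0, e1] at h
    -- forward: y is in the stable set of the orbit
    have hws : ∀ j : ℕ, dist ((⇑F)^[j] ((F ^ (n2 : ℤ)) y)) ((⇑F)^[j] p) ≤ ε0f := by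
      intro j
      have h := hy ((n2 : ℤ) + j)
      have e1 : (F ^ ((n2 : ℤ) + j)) y = (⇑F)^[j] ((F ^ (n2 : ℤ)) y) := by
        rw [add_comm, aux_zpow_add_apply, aux_pow_apply]
      have e2 : ξ ((n2 : ℤ) + j) = (⇑F)^[j] p := by
        by_cases hj : j = 0
        · subst hj
          rw [hξ_mid2 _ (by omega) (by omega)]
          have e : ((n2 : ℤ) + (0 : ℕ)).toNat = n2 := by omega
          rw [e, hc2n]
          simp
        · rw [hξ_ge _ (by omega), show (n2 : ℤ) + j - n2 = (j : ℤ) by ring, aux_pow_apply]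
      rw [e1, e2] at h
      exact le_trans h.le (le_trans (min_le_right _ _) (min_le_left _ _))
    have hw_stab : (F ^ (n2 : ℤ)) y ∈ stableSet ⇑F p := hstabf _ (fun j => hws j)
    have hy_stab : y ∈ stableSet ⇑F ((F ^ (-(n2 : ℤ))) p) := by
      have h := aux_shift_stable F ((F ^ (n2 : ℤ)) y) p n2 hw_stab
      have e : (F ^ (-(n2 : ℤ))) ((F ^ (n2 : ℤ)) y) = y := by
        rw [← aux_zpow_add_apply]
        simp
      rwa [e] at h
    have hyS : y ∈ orbitStable F p := Set.mem_iUnion.mpr ⟨-(n2 : ℤ), hy_stab⟩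
    -- backward: y is in the unstable set of the orbit
    have hvs : ∀ j : ℕ, dist ((⇑F.symm)^[j] ((F ^ (-(n1 : ℤ))) y)) ((⇑F.symm)^[j] p) ≤ ε0b := by
      intro j
      have h := hy (-(n1 : ℤ) - j)
      have e1 : (F ^ (-(n1 : ℤ) - j)) y = (⇑F.symm)^[j] ((F ^ (-(n1 : ℤ))) y) := by
        rw [aux_symm_iterate, ← aux_zpow_add_apply,
          show -(j : ℤ) + -(n1 : ℤ) = -(n1 : ℤ) - j by ring]
      have e2 : ξ (-(n1 : ℤ) - j) = (⇑F.symm)^[j] p := by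
        rw [hξ_le _ (by omega), aux_symm_iterate,
          show (-(n1 : ℤ) - j + n1) = -(j : ℤ) by ring]
      rw [e1, e2] at h
      exact le_trans h.le (le_trans (min_le_right _ _) (min_le_right _ _))
    have hv_stab : (F ^ (-(n1 : ℤ))) y ∈ stableSet ⇑F.symm p := hstabb _ (fun j => hvs j)
    have hy_unstab : y ∈ stableSet ⇑F.symm ((F ^ (n1 : ℤ)) p) := by
      have h := aux_shift_stable F.symm ((F ^ (-(n1 : ℤ))) y) p n1 hv_stab
      have hFs : (F.symm ^ (-(n1 : ℤ)) : M ≃ M) = F ^ (n1 : ℤ) := by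
        show ((F⁻¹ : Equiv.Perm M) ^ (-(n1 : ℤ))) = F ^ (n1 : ℤ)
        rw [inv_zpow, zpow_neg, inv_inv]
      rw [hFs] at h
      have e : (F ^ (n1 : ℤ)) ((F ^ (-(n1 : ℤ))) y) = y := by
        rw [← aux_zpow_add_apply]
        simp
      rwa [e] at h
    have hyU : y ∈ orbitUnstable F p := Set.mem_iUnion.mpr ⟨(n1 : ℤ), hy_unstab⟩
    have htrans := hKS.2 p p y ⟨k, hk, hp⟩ ⟨k, hk, hp⟩ hyS hyU
    refine ⟨y, ⟨hyS, hyU, htrans⟩, ?_⟩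
    rw [dist_comm]
    exact lt_of_lt_of_le hy0 (le_trans (min_le_left _ _) (by linarith))
  · -- homoclinic class ⊆ chain class
    refine closure_minimal ?_ (aux_chainClass_closed f.continuous p)
    intro z hz
    obtain ⟨hzs, hzu, -⟩ := hz
    obtain ⟨a, hza⟩ := Set.mem_iUnion.mp hzs
    obtain ⟨b, hzb⟩ := Set.mem_iUnion.mp hzu
    intro ε hε
    exact ⟨aux_stable_chain F p z k hk hp a hza hε,
      aux_unstable_chain F p z k hk hp b hzb hε⟩
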